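/- The polynomial H_B(x) = x^{Q1+Q2} + x^{Q1+1} + x^{Q1} + x^{Q2+1} + 1 has no roots in the unit circle μ_{q+1} = {x ∈ F_{q^2} : x^{q+1} = 1} if and only if i·(j+1) is odd (equivalently, i is odd and j is even) or m is even. -/

import Mathlib

lemma two_pow_mod_three (n : ℕ) : 2 ^ n % 3 = if Even n then 1 else 2 := by
  induction n with
  | zero => simp
  | succ k ih =>
    rw [pow_succ, Nat.mul_mod, ih]
    by_cases h : Even k <;> simp [h, Nat.even_add_one]

lemma cube_pow_two {F : Type*} [Field F] {x : F} (h3 : x ^ 3 = 1) (k : ℕ) :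
    x ^ 2 ^ k = if Even k then x else x ^ 2 := by
  induction k with
  | zero => simp
  | succ n ih =>
    rw [pow_succ, pow_mul, ih]
    by_cases h : Even n
    · simp [h, Nat.even_add_one]
    · simp only [h, if_false, Nat.even_add_one, not_not, if_true]
      rw [← pow_mul]
      norm_num
      rw [show (4:ℕ) = 3 + 1 from rfl, pow_add, h3, one_mul, pow_one]

/-- `H_B(x) = x^{Q1+Q2} + x^{Q1+1} + x^{Q1} + x^{Q2+1} + 1` has no roots in the unit
circle `μ_{q+1}` of `F_{q^2}` iff `i·(j+1)` is odd or `m` is even. -/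
theorem HB_no_roots_unit_circle_iff
    (m i j : ℕ) (hm : 0 < m) (hi : 0 < i) (hj : 0 < j)
    (q Q1 Q2 : ℕ) (hq : q = 2 ^ m) (hQ1 : Q1 = 2 ^ i) (hQ2 : Q2 = 2 ^ j)
    (F : Type*) [Field F] [Fintype F] (hF : Fintype.card F = q ^ 2) :
    (∀ x : F, x ^ (q + 1) = 1 →
        x ^ (Q1 + Q2) + x ^ (Q1 + 1) + x ^ Q1 + x ^ (Q2 + 1) + 1 ≠ 0) ↔
      (Odd (i * (j + 1)) ∨ Even m) := by
  subst hq hQ1 hQ2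
  haveI : Fact (Nat.Prime 2) := ⟨Nat.prime_two⟩
  haveI : Fact (Nat.Prime 3) := ⟨Nat.prime_three⟩
  -- characteristic 2
  have hcard : Fintype.card F = 2 ^ (2 * m) := by
    rw [hF, ← pow_mul, mul_comm]
  obtain ⟨n, hp, hcard'⟩ := FiniteField.card F (ringChar F)
  have hp2 : ringChar F = 2 := by
    have hdvd : ringChar F ∣ 2 ^ (2 * m) := by
      rw [← hcard, hcard']
      exact dvd_pow_self _ (by exact_mod_cast n.ne_zero)
    exact (Nat.prime_dvd_prime_iff_eq hp Nat.prime_two).mp (hp.dvd_of_dvd_pow hdvd)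
  haveI hchar : CharP F 2 := hp2 ▸ ringChar.charP F
  have h2 : (2 : F) = 0 := by
    have := CharP.cast_eq_zero F 2
    exact_mod_cast this
  -- number theory facts
  have hq1odd : ¬ 2 ∣ 2 ^ m + 1 := by
    have : 2 ∣ 2 ^ m := dvd_pow_self 2 hm.ne'
    omega
  have h3mod := two_pow_mod_three m
  constructor
  · -- no roots → condition
    intro hno
    by_contra hcon
    push_neg at hcon
    obtain ⟨h1, h2'⟩ := hcon
    classical
    have h3dvd : 3 ∣ 2 ^ m + 1 := by
      rw [if_neg h2'] at h3mod
      omega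
    -- find a primitive cube root of unity ω
    have hcardu : 3 ∣ Fintype.card Fˣ := by
      rw [Fintype.card_units, hF]
      have h4 : (2 ^ m) ^ 2 = 4 ^ m := by
        rw [← pow_mul, mul_comm, pow_mul]; norm_num
      rw [h4]
      simpa using Nat.sub_dvd_pow_sub_pow 4 1 m
    obtain ⟨u, hu3⟩ := exists_prime_orderOf_dvd_card 3 hcardu
    set ω : F := (u : F) with hωdef
    have hω3 : ω ^ 3 = 1 := by
      have h' := pow_orderOf_eq_one u
      rw [hu3] at h'
      have := congrArg (fun v : Fˣ => (v : F)) h'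
      simpa using this
    have hωne : ω ≠ 1 := by
      intro h
      have : u = 1 := Units.ext (by rw [Units.val_one]; exact h)
      rw [this] at hu3
      simp at hu3
    have hωq : ω ^ (2 ^ m + 1) = 1 := by
      obtain ⟨t, ht⟩ := h3dvd
      rw [ht, pow_mul, hω3, one_pow]
    have hω2 : ω ^ 2 + ω + 1 = 0 := by
      have hfac : (ω + 1) * (ω ^ 2 + ω + 1) = 0 := by
        linear_combination hω3 + (1 + ω ^ 2 + ω) * h2
      rcases mul_eq_zero.mp hfac with h' | h'
      · exact absurd (by linear_combination h' - h2) hωne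
      · exact h'
    have hω4 : (ω ^ 2) ^ 2 = ω := by
      rw [← pow_mul]
      norm_num
      rw [show (4:ℕ) = 3 + 1 from rfl, pow_add, hω3, one_mul, pow_one]
    have hr3 : (ω ^ 2) ^ 3 = 1 := by
      rw [← pow_mul, mul_comm, pow_mul, hω3, one_pow]
    have hrq : (ω ^ 2) ^ (2 ^ m + 1) = 1 := by
      rw [← pow_mul, mul_comm, pow_mul, hωq, one_pow]
    -- exhibit a root
    have hcase : Even i ∨ Even (j + 1) := by
      rcases Nat.even_mul.mp (Nat.even_iff.mpr (by
        rcases Nat.even_or_odd (i * (j + 1)) with h | h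
        · exact Nat.even_iff.mp h
        · exact absurd h h1)) with h | h
      · exact Or.inl h
      · exact Or.inr h
    have evenCase : ∀ (hie : Even i) (hjo : Odd j), False := by
      intro hie hjo
      apply hno ω hωq
      have hu' : ω ^ 2 ^ i = ω := by
        rw [cube_pow_two hω3 i, if_pos hie]
      have hw' : ω ^ 2 ^ j = ω ^ 2 := by
        rw [cube_pow_two hω3 j, if_neg (Nat.not_even_iff_odd.mpr hjo)]
      rw [pow_add, pow_add, pow_add, pow_one, hu', hw']
      linear_combination 2 * hω3 + hω2 + h2
    rcases hcase with hie | hje1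
    · rcases Nat.even_or_odd j with hje | hjo
      · -- i even, j even : root ω^2
        apply hno (ω ^ 2) hrq
        have hu' : (ω ^ 2) ^ 2 ^ i = ω ^ 2 := by
          rw [cube_pow_two hr3 i, if_pos hie]
        have hw' : (ω ^ 2) ^ 2 ^ j = ω ^ 2 := by
          rw [cube_pow_two hr3 j, if_pos hje]
        rw [pow_add, pow_add, pow_add, pow_one, hu', hw']
        linear_combination 3 * ω * hω3 + hω2 + ω * h2
      · exact evenCase hie hjo
    · have hjo : Odd j := Nat.not_even_iff_odd.mp (Nat.even_add_one.mp hje1)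
      rcases Nat.even_or_odd i with hie | hio
      · exact evenCase hie hjo
      · -- i odd, j odd : root ω^2
        apply hno (ω ^ 2) hrq
        have hu' : (ω ^ 2) ^ 2 ^ i = ω := by
          rw [cube_pow_two hr3 i, if_neg (Nat.not_even_iff_odd.mpr hio), hω4]
        have hw' : (ω ^ 2) ^ 2 ^ j = ω := by
          rw [cube_pow_two hr3 j, if_neg (Nat.not_even_iff_odd.mpr hjo), hω4]
        rw [pow_add, pow_add, pow_add, pow_one, hu', hw']
        linear_combination 2 * hω3 + hω2 + h2
  · -- condition → no roots
    intro hcond x hx hroot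
    have hx0 : x ≠ 0 := by
      intro h0
      rw [h0, zero_pow (by omega)] at hx
      exact zero_ne_one hx
    obtain ⟨a, ha⟩ : ∃ a, 2 ^ i = a + 1 := ⟨2 ^ i - 1, by have := Nat.one_le_two_pow (n := i); omega⟩
    obtain ⟨b, hb⟩ : ∃ b, 2 ^ j = b + 1 := ⟨2 ^ j - 1, by have := Nat.one_le_two_pow (n := j); omega⟩
    rw [ha, hb] at hroot
    have hxe : ∀ s t : ℕ, x ^ ((2 ^ m + 1) * s + t) = x ^ t := by
      intro s t
      rw [pow_add, pow_mul, hx, one_pow, one_mul]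
    -- conjugate equation
    have h0 : (x ^ (a + 1 + (b + 1))) ^ 2 ^ m + (x ^ (a + 1 + 1)) ^ 2 ^ m
        + (x ^ (a + 1)) ^ 2 ^ m + (x ^ (b + 1 + 1)) ^ 2 ^ m + 1 = 0 := by
      have hc := congrArg (· ^ 2 ^ m) hroot
      simp only [zero_pow (pow_ne_zero m two_ne_zero)] at hc
      rw [add_pow_char_pow, add_pow_char_pow, add_pow_char_pow, add_pow_char_pow,
        one_pow] at hc
      exact hc
    have e1 : (x ^ (a + 1 + (b + 1))) ^ 2 ^ m * x ^ (a + 1 + (b + 1)) = 1 := by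
      rw [← pow_mul, ← pow_add,
        show (a + 1 + (b + 1)) * 2 ^ m + (a + 1 + (b + 1))
          = (2 ^ m + 1) * (a + 1 + (b + 1)) + 0 by ring, hxe, pow_zero]
    have e2 : (x ^ (a + 1 + 1)) ^ 2 ^ m * x ^ (a + 1 + (b + 1)) = x ^ b := by
      rw [← pow_mul, ← pow_add,
        show (a + 1 + 1) * 2 ^ m + (a + 1 + (b + 1)) = (2 ^ m + 1) * (a + 2) + b by ring, hxe]
    have e3 : (x ^ (a + 1)) ^ 2 ^ m * x ^ (a + 1 + (b + 1)) = x ^ (b + 1) := by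
      rw [← pow_mul, ← pow_add,
        show (a + 1) * 2 ^ m + (a + 1 + (b + 1)) = (2 ^ m + 1) * (a + 1) + (b + 1) by ring, hxe]
    have e4 : (x ^ (b + 1 + 1)) ^ 2 ^ m * x ^ (a + 1 + (b + 1)) = x ^ a := by
      rw [← pow_mul, ← pow_add,
        show (b + 1 + 1) * 2 ^ m + (a + 1 + (b + 1)) = (2 ^ m + 1) * (b + 2) + a by ring, hxe]
    have hG : 1 + x ^ b + x ^ (b + 1) + x ^ a + x ^ (a + 1 + (b + 1)) = 0 := by
      linear_combination x ^ (a + 1 + (b + 1)) * h0 - e1 - e2 - e3 - e4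
    have hsum : (x ^ a + x ^ b) * (x ^ 2 + x + 1) = 0 := by
      linear_combination hroot + hG - (x ^ (a + 1 + (b + 1)) + 1) * h2
    -- helper: contradiction from x = 1
    have hx1F : x = 1 → False := by
      intro hx1
      rw [hx1] at hroot
      have : (1 : F) = 0 := by linear_combination hroot - 2 * h2
      exact one_ne_zero this
    -- helper: orderOf x ∣ 3 and Even m gives contradiction
    have hEvenm : Even m → orderOf x ∣ 3 → False := by
      intro hEm hd
      have hnd : ¬ 3 ∣ 2 ^ m + 1 := by
        rw [if_pos hEm] at h3mod
        omega
      have d2 : orderOf x ∣ 2 ^ m + 1 := orderOf_dvd_of_pow_eq_one hx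
      rcases (Nat.prime_three.eq_one_or_self_of_dvd _ hd) with h1 | h3
      · exact hx1F (orderOf_eq_one_iff.mp h1)
      · exact hnd (h3 ▸ d2)
    have hodd_ord : Odd (orderOf x) := by
      have d2 : orderOf x ∣ 2 ^ m + 1 := orderOf_dvd_of_pow_eq_one hx
      have : ¬ 2 ∣ orderOf x := fun hdd => hq1odd (hdd.trans d2)
      exact Nat.odd_iff.mpr (by omega)
    rcases mul_eq_zero.mp hsum with hAB | hx2
    · -- x^a = x^b
      have hv : (x ^ (a + 1)) ^ 2 + x ^ (a + 1) + 1 = 0 := by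
        linear_combination hroot + (x ^ (a + 2) - x ^ 2) * hAB - x ^ (a + b + 2) * h2
      have hv3 : (x ^ (a + 1)) ^ 3 = 1 := by
        linear_combination (x ^ (a + 1) + 1) * hv - ((x ^ (a + 1)) ^ 2 + x ^ (a + 1)) * h2 - h2
      have hx3a : x ^ ((a + 1) * 3) = 1 := by rw [pow_mul]; exact hv3
      have hd : orderOf x ∣ 3 := by
        have d1 : orderOf x ∣ (a + 1) * 3 := orderOf_dvd_of_pow_eq_one hx3a
        rw [← ha] at d1
        exact ((hodd_ord.coprime_two_right).pow_right i).dvd_of_dvd_mul_left d1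
      rcases hcond with hOdd | hEm
      · obtain ⟨hio, hjo1⟩ := Nat.odd_mul.mp hOdd
        have hje : Even j := by
          rcases Nat.even_or_odd j with h | h
          · exact h
          · exact absurd hjo1 (by simp [Nat.even_add_one, Nat.not_even_iff_odd,
              Nat.not_even_iff_odd.mpr h, parity_simps])
        have hx3 : x ^ 3 = 1 := orderOf_dvd_iff_pow_eq_one.mp hd
        have hu' : x ^ (a + 1) = x ^ 2 := by
          rw [← ha, cube_pow_two hx3 i, if_neg (Nat.not_even_iff_odd.mpr hio)]
        have hw' : x ^ (b + 1) = x := by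
          rw [← hb, cube_pow_two hx3 j, if_pos hje]
        have hab1 : x ^ (a + 1) = x ^ (b + 1) := by
          linear_combination x * hAB - x ^ (b + 1) * h2
        have hxx : x * x = x * 1 := by
          rw [mul_one]
          linear_combination hab1 - hu' + hw'
        exact hx1F (mul_left_cancel₀ hx0 hxx)
      · exact hEvenm hEm hd
    · -- x^2 + x + 1 = 0
      have hx3 : x ^ 3 = 1 := by
        linear_combination (x + 1) * hx2 - (x ^ 2 + x) * h2 - h2
      rcases hcond with hOdd | hEm
      · obtain ⟨hio, hjo1⟩ := Nat.odd_mul.mp hOdd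
        have hje : Even j := by
          rcases Nat.even_or_odd j with h | h
          · exact h
          · exact absurd hjo1 (by simp [Nat.even_add_one, Nat.not_even_iff_odd,
              Nat.not_even_iff_odd.mpr h, parity_simps])
        have hu' : x ^ (a + 1) = x ^ 2 := by
          rw [← ha, cube_pow_two hx3 i, if_neg (Nat.not_even_iff_odd.mpr hio)]
        have hw' : x ^ (b + 1) = x := by
          rw [← hb, cube_pow_two hx3 j, if_pos hje]
        have t1 : x ^ (a + 1 + (b + 1)) = 1 := by
          rw [pow_add, hu', hw', ← pow_succ, hx3]
        have t2 : x ^ (a + 1 + 1) = 1 := by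
          rw [pow_succ, hu', ← pow_succ, hx3]
        have t3 : x ^ (b + 1 + 1) = x ^ 2 := by
          rw [pow_succ, hw', ← sq]
        have hone : (1 : F) = 0 := by
          linear_combination hroot - t1 - t2 - t3 - hu' - (1 + x ^ 2) * h2
        exact one_ne_zero hone
      · exact hEvenm hEm (orderOf_dvd_of_pow_eq_one hx3)
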